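/- Let r : S → A → ℝ, g ∈ ℝ, and h : S → ℝ satisfy the robust average-reward Bellman equation g + h s = max_a ( r s a + σ h (s,a) ) for every s. Let γ ∈ [0,1) and let V : S → ℝ satisfy the robust discounted Bellman equation V s = max_a ( r s a + γ * σ V (s,a) ) for every s. Then Sp(V) ≤ 4 * ‖h‖∞, and therefore Sp((1−γ) • V) ≤ 4 * (1−γ) * ‖h‖∞. -/

import Mathlib

open Finset

noncomputable def supNorm {X : Type*} [Fintype X] [Nonempty X] (v : X → ℝ) : ℝ :=
  Finset.univ.sup' Finset.univ_nonempty fun x => |v x|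

noncomputable def spanSN {X : Type*} [Fintype X] [Nonempty X] (v : X → ℝ) : ℝ :=
  (Finset.univ.sup' Finset.univ_nonempty v) - (Finset.univ.inf' Finset.univ_nonempty v)

noncomputable def sigma' {S A : Type*} [Fintype S] (P : S → A → Set (S → ℝ))
    (h : S → ℝ) (s : S) (a : A) : ℝ :=
  sInf {x : ℝ | ∃ p ∈ P s a, x = ∑ s', p s' * h s'}

noncomputable def bellman {S A : Type*} [Fintype S] [Fintype A] [Nonempty A]
    (P : S → A → Set (S → ℝ)) (r : S → A → ℝ) (Q : S × A → ℝ) : S × A → ℝ :=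
  fun sa => r sa.1 sa.2 +
    sigma' P (fun s' => Finset.univ.sup' Finset.univ_nonempty fun a' => Q (s', a')) sa.1 sa.2

section Aux

variable {S A : Type*} [Fintype S] [Nonempty S]
  (P : S → A → Set (S → ℝ))

lemma aux_sum_ge {p : S → ℝ} (hp : p ∈ stdSimplex ℝ S) (v : S → ℝ) :
    Finset.univ.inf' Finset.univ_nonempty v ≤ ∑ s', p s' * v s' := by
  obtain ⟨hp0, hp1⟩ := hp
  calc Finset.univ.inf' Finset.univ_nonempty v
      = ∑ s', p s' * Finset.univ.inf' Finset.univ_nonempty v := by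
        rw [← Finset.sum_mul, hp1, one_mul]
    _ ≤ ∑ s', p s' * v s' :=
        Finset.sum_le_sum fun i _ =>
          mul_le_mul_of_nonneg_left (Finset.inf'_le _ (Finset.mem_univ i)) (hp0 i)

lemma aux_setNe (hne : ∀ s a, (P s a).Nonempty) (v : S → ℝ) (s : S) (a : A) :
    {x : ℝ | ∃ p ∈ P s a, x = ∑ s', p s' * v s'}.Nonempty := by
  obtain ⟨p, hp⟩ := hne s a
  exact ⟨∑ s', p s' * v s', p, hp, rfl⟩

lemma aux_bdd (hsub : ∀ s a, P s a ⊆ stdSimplex ℝ S) (v : S → ℝ) (s : S) (a : A) :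
    BddBelow {x : ℝ | ∃ p ∈ P s a, x = ∑ s', p s' * v s'} := by
  refine ⟨Finset.univ.inf' Finset.univ_nonempty v, ?_⟩
  rintro x ⟨p, hp, rfl⟩
  exact aux_sum_ge (hsub s a hp) v

lemma inf'_le_sigma' (hne : ∀ s a, (P s a).Nonempty)
    (hsub : ∀ s a, P s a ⊆ stdSimplex ℝ S) (v : S → ℝ) (s : S) (a : A) :
    Finset.univ.inf' Finset.univ_nonempty v ≤ sigma' P v s a := by
  apply le_csInf (aux_setNe P hne v s a)
  rintro x ⟨p, hp, rfl⟩
  exact aux_sum_ge (hsub s a hp) v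

lemma sigma'_le_of_mem (hsub : ∀ s a, P s a ⊆ stdSimplex ℝ S) (v : S → ℝ) (s : S) (a : A)
    {p : S → ℝ} (hp : p ∈ P s a) : sigma' P v s a ≤ ∑ s', p s' * v s' :=
  csInf_le (aux_bdd P hsub v s a) ⟨p, hp, rfl⟩

lemma sigma'_le_sup' (hne : ∀ s a, (P s a).Nonempty)
    (hsub : ∀ s a, P s a ⊆ stdSimplex ℝ S) (v : S → ℝ) (s : S) (a : A) :
    sigma' P v s a ≤ Finset.univ.sup' Finset.univ_nonempty v := by
  obtain ⟨p, hp⟩ := hne s a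
  refine (sigma'_le_of_mem P hsub v s a hp).trans ?_
  obtain ⟨hp0, hp1⟩ := hsub s a hp
  calc ∑ s', p s' * v s'
      ≤ ∑ s', p s' * Finset.univ.sup' Finset.univ_nonempty v :=
        Finset.sum_le_sum fun i _ =>
          mul_le_mul_of_nonneg_left (Finset.le_sup' _ (Finset.mem_univ i)) (hp0 i)
    _ = _ := by rw [← Finset.sum_mul, hp1, one_mul]

lemma sigma'_mono (hne : ∀ s a, (P s a).Nonempty)
    (hsub : ∀ s a, P s a ⊆ stdSimplex ℝ S) {v w : S → ℝ} (hvw : ∀ s, v s ≤ w s)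
    (s : S) (a : A) : sigma' P v s a ≤ sigma' P w s a := by
  apply le_csInf (aux_setNe P hne w s a)
  rintro x ⟨p, hp, rfl⟩
  refine (sigma'_le_of_mem P hsub v s a hp).trans ?_
  exact Finset.sum_le_sum fun i _ =>
    mul_le_mul_of_nonneg_left (hvw i) ((hsub s a hp).1 i)

lemma sigma'_add_const (hne : ∀ s a, (P s a).Nonempty)
    (hsub : ∀ s a, P s a ⊆ stdSimplex ℝ S) (v : S → ℝ) (c : ℝ) (s : S) (a : A) :
    sigma' P (fun s' => v s' + c) s a = sigma' P v s a + c := by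
  have hsum : ∀ p ∈ P s a, ∑ s', p s' * (v s' + c) = (∑ s', p s' * v s') + c := by
    intro p hp
    have h1 := (hsub s a hp).2
    simp only [mul_add, Finset.sum_add_distrib, ← Finset.sum_mul, h1, one_mul]
  unfold sigma'
  apply le_antisymm
  · have : sInf {x : ℝ | ∃ p ∈ P s a, x = ∑ s', p s' * (v s' + c)} - c ≤
        sInf {x : ℝ | ∃ p ∈ P s a, x = ∑ s', p s' * v s'} := by
      apply le_csInf (aux_setNe P hne v s a)
      rintro x ⟨p, hp, rfl⟩
      have hmem : (∑ s', p s' * v s') + c ∈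
          {x : ℝ | ∃ p ∈ P s a, x = ∑ s', p s' * (v s' + c)} :=
        ⟨p, hp, (hsum p hp).symm⟩
      have h2 := csInf_le (aux_bdd P hsub (fun s' => v s' + c) s a) hmem
      unfold sigma' at *
      linarith [h2]
    linarith
  · apply le_csInf (aux_setNe P hne (fun s' => v s' + c) s a)
    rintro x ⟨p, hp, rfl⟩
    have h2 := sigma'_le_of_mem P hsub v s a hp
    unfold sigma' at h2
    rw [hsum p hp]
    linarith

end Aux

/-- Core of the paper's Lemma 5: the span of the robust discounted value function is
bounded by `4‖h‖∞`, where `h` is the robust bias. -/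
theorem stmt9 {S A : Type*} [Fintype S] [Fintype A] [Nonempty S] [Nonempty A]
    (P : S → A → Set (S → ℝ))
    (hne : ∀ s a, (P s a).Nonempty)
    (hsub : ∀ s a, P s a ⊆ stdSimplex ℝ S)
    (r : S → A → ℝ) (g : ℝ) (h : S → ℝ)
    (hBellman : ∀ s, g + h s =
      Finset.univ.sup' Finset.univ_nonempty fun a => r s a + sigma' P h s a)
    (γ : ℝ) (hγ0 : 0 ≤ γ) (hγ1 : γ < 1)
    (V : S → ℝ)
    (hV : ∀ s, V s =
      Finset.univ.sup' Finset.univ_nonempty fun a => r s a + γ * sigma' P V s a) :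
    spanSN V ≤ 4 * supNorm h ∧ spanSN ((1 - γ) • V) ≤ 4 * (1 - γ) * supNorm h := by
  set M := supNorm h with hM
  have habs : ∀ s, |h s| ≤ M := fun s => Finset.le_sup' (fun x => |h x|) (Finset.mem_univ s)
  have hhle : ∀ s, h s ≤ M := fun s => (abs_le.mp (habs s)).2
  have hhge : ∀ s, -M ≤ h s := fun s => (abs_le.mp (habs s)).1
  have hγp : (0:ℝ) < 1 - γ := by linarith
  set g' := g / (1 - γ) with hg'
  have hgg' : g + γ * g' = g' := by
    rw [hg', div_eq_mul_inv]
    linear_combination (-g) * mul_inv_cancel₀ hγp.ne'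
  -- bounds on sigma' P h
  have hσh_le : ∀ s a, sigma' P h s a ≤ M := fun s a =>
    (sigma'_le_sup' P hne hsub h s a).trans
      (Finset.sup'_le _ _ fun i _ => hhle i)
  have hσh_ge : ∀ s a, -M ≤ sigma' P h s a := fun s a =>
    le_trans (Finset.le_inf' Finset.univ_nonempty h fun i _ => hhge i) (inf'_le_sigma' P hne hsub h s a)
  -- each action's value bounded by Bellman sup
  have hrσ_le : ∀ s a, r s a + sigma' P h s a ≤ g + h s := by
    intro s a
    rw [hBellman s]
    exact Finset.le_sup' (fun a => r s a + sigma' P h s a) (Finset.mem_univ a)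
  -- Upper bound: V s ≤ g' + h s + M
  have hupper : ∀ s, V s ≤ g' + h s + M := by
    set d := Finset.univ.sup' Finset.univ_nonempty (fun s => V s - (g' + h s + M)) with hd
    have hVle : ∀ s', V s' ≤ h s' + (g' + M + d) := by
      intro s'
      have := Finset.le_sup' (fun s => V s - (g' + h s + M)) (Finset.mem_univ s')
      linarith
    have key : ∀ s, V s ≤ (g' + h s + M) + γ * d := by
      intro s
      rw [hV s]
      apply Finset.sup'_le
      intro a _
      have h1 : sigma' P V s a ≤ sigma' P h s a + (g' + M + d) := by
        have := sigma'_mono P hne hsub hVle s a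
        rwa [sigma'_add_const P hne hsub h (g' + M + d) s a] at this
      have h2 := hrσ_le s a
      have h3 := hσh_ge s a
      have h4 : γ * sigma' P V s a ≤ γ * (sigma' P h s a + (g' + M + d)) :=
        mul_le_mul_of_nonneg_left h1 hγ0
      nlinarith [hσh_le s a]
    have hd0 : d ≤ 0 := by
      obtain ⟨s, _, hs⟩ := Finset.exists_mem_eq_sup' Finset.univ_nonempty
        (fun s => V s - (g' + h s + M))
      have hds : d = V s - (g' + h s + M) := hd.trans hs
      have : d ≤ γ * d := by
        have := key s
        linarith
      nlinarith
    intro s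
    have := Finset.le_sup' (fun s => V s - (g' + h s + M)) (Finset.mem_univ s)
    linarith
  -- Lower bound: g' + h s - M ≤ V s
  have hlower : ∀ s, g' + h s - M ≤ V s := by
    set e := Finset.univ.sup' Finset.univ_nonempty (fun s => (g' + h s - M) - V s) with he
    have hVge : ∀ s', h s' + (g' - M - e) ≤ V s' := by
      intro s'
      have := Finset.le_sup' (fun s => (g' + h s - M) - V s) (Finset.mem_univ s')
      linarith
    have key : ∀ s, (g' + h s - M) - γ * e ≤ V s := by
      intro s
      obtain ⟨a, _, ha⟩ := Finset.exists_mem_eq_sup' Finset.univ_nonempty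
        (fun a => r s a + sigma' P h s a)
      have hB : g + h s = r s a + sigma' P h s a := by rw [hBellman s, ha]
      have hVa : r s a + γ * sigma' P V s a ≤ V s := by
        rw [hV s]
        exact Finset.le_sup' (fun a => r s a + γ * sigma' P V s a) (Finset.mem_univ a)
      have h1 : sigma' P h s a + (g' - M - e) ≤ sigma' P V s a := by
        have := sigma'_mono P hne hsub hVge s a
        rwa [sigma'_add_const P hne hsub h (g' - M - e) s a] at this
      have h4 : γ * (sigma' P h s a + (g' - M - e)) ≤ γ * sigma' P V s a :=
        mul_le_mul_of_nonneg_left h1 hγ0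
      nlinarith [hσh_le s a]
    have he0 : e ≤ 0 := by
      obtain ⟨s, _, hs⟩ := Finset.exists_mem_eq_sup' Finset.univ_nonempty
        (fun s => (g' + h s - M) - V s)
      have hes : e = (g' + h s - M) - V s := he.trans hs
      have : e ≤ γ * e := by
        have := key s
        linarith
      nlinarith
    intro s
    have := Finset.le_sup' (fun s => (g' + h s - M) - V s) (Finset.mem_univ s)
    linarith
  -- conclude
  have hspan : spanSN V ≤ 4 * M := by
    obtain ⟨s1, _, hs1⟩ := Finset.exists_mem_eq_sup' (Finset.univ_nonempty (α := S)) V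
    obtain ⟨s2, _, hs2⟩ := Finset.exists_mem_eq_inf' (Finset.univ_nonempty (α := S)) V
    rw [spanSN, hs1, hs2]
    have := hupper s1
    have := hlower s2
    have := hhle s1
    have := hhge s2
    linarith
  refine ⟨hspan, ?_⟩
  obtain ⟨s1, _, hs1⟩ := Finset.exists_mem_eq_sup' (Finset.univ_nonempty (α := S))
    ((1 - γ) • V)
  obtain ⟨s2, _, hs2⟩ := Finset.exists_mem_eq_inf' (Finset.univ_nonempty (α := S))
    ((1 - γ) • V)
  rw [spanSN, hs1, hs2]
  have hVd : V s1 - V s2 ≤ 4 * M := by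
    have h1 : V s1 ≤ Finset.univ.sup' Finset.univ_nonempty V :=
      Finset.le_sup' _ (Finset.mem_univ s1)
    have h2 : Finset.univ.inf' Finset.univ_nonempty V ≤ V s2 :=
      Finset.inf'_le _ (Finset.mem_univ s2)
    have := hspan
    rw [spanSN] at this
    linarith
  have : ((1 - γ) • V) s1 - ((1 - γ) • V) s2 = (1 - γ) * (V s1 - V s2) := by
    simp [Pi.smul_apply, smul_eq_mul]
    ring
  rw [this]
  calc (1 - γ) * (V s1 - V s2) ≤ (1 - γ) * (4 * M) :=
        mul_le_mul_of_nonneg_left hVd (le_of_lt hγp)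
    _ = 4 * (1 - γ) * M := by ring
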